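/- arXiv:1908.09036 — 4 statements merged into one kernel-verified Lean document; each statement's English description precedes it below -/
import Mathlib

section
/- Let h ≥ 1, E(u) = u+p, c_0 = p, and define N_∇ = -uλ d/du on the ring O_F of power series over F converging on the open unit disc, where λ = Π_{n≥0} φ^n(E/c_0). Let C_0 = [[0, -1],[E^h, 0]] and B = [[h u λ_+ λ_-', 0],[0, h u λ_- λ_+']] (λ_± as above, ' = d/du). Then the monodromy relation N_∇(C_0) + B C_0 = p(E/c_0) C_0 φ(B) holds, where N_∇ and φ are applied entrywise. -/
open PowerSeries Filter

noncomputable section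

/-- `Hge m vp v f` says the Gauss valuation `v_R(f) = min_i (i + m * vp (a_i))` is `≥ v`. -/
def Hge {F : Type*} [Field F] (m : ℝ) (vp : F → ℝ) (v : ℝ) (f : PowerSeries F) : Prop :=
  ∀ i : ℕ, (PowerSeries.coeff i) f ≠ 0 → v ≤ (i : ℝ) + m * vp ((PowerSeries.coeff i) f)

/-- `vReq m vp f v` says `v_R(f) = v`: it is a lower bound and it is attained. -/
def vReq {F : Type*} [Field F] (m : ℝ) (vp : F → ℝ) (f : PowerSeries F) (v : ℝ) : Prop :=
  Hge m vp v f ∧ ∃ i : ℕ, (PowerSeries.coeff i) f ≠ 0 ∧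
    (i : ℝ) + m * vp ((PowerSeries.coeff i) f) = v

/-- membership in `R = O_{F,[0,p^{-1/m}]}`: `i + m * vp (a_i) → ∞`. -/
def MemR {F : Type*} [Field F] (m : ℝ) (vp : F → ℝ) (f : PowerSeries F) : Prop :=
  ∀ N : ℝ, ∀ᶠ i : ℕ in Filter.atTop,
    (PowerSeries.coeff i) f = 0 ∨ N ≤ (i : ℝ) + m * vp ((PowerSeries.coeff i) f)

/-- The Frobenius `φ` on power series: substitution `u ↦ u^p`. -/
def phiF {F : Type*} [Field F] (p : ℕ) (f : PowerSeries F) : PowerSeries F :=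
  PowerSeries.mk fun n => if p ∣ n then (PowerSeries.coeff (n / p)) f else 0

/-- Formal derivative `d/du` of a power series. -/
def dWrt {F : Type*} [Field F] (f : PowerSeries F) : PowerSeries F :=
  PowerSeries.mk fun n => ((n : F) + 1) * (PowerSeries.coeff (n + 1)) f

namespace Stmt5Aux

variable {F : Type*} [Field F]


theorem coeff_phiF (p : ℕ) (f : PowerSeries F) (n : ℕ) :
    coeff n (phiF p f) = if p ∣ n then coeff (n / p) f else 0 := by
  simp [phiF]

theorem coeff_phiF_mul (p : ℕ) (hp : p ≠ 0) (f : PowerSeries F) (n : ℕ) :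
    coeff (p * n) (phiF p f) = coeff n f := by
  rw [coeff_phiF, if_pos ⟨n, rfl⟩, Nat.mul_div_cancel_left _ (Nat.pos_of_ne_zero hp)]

theorem phiF_add (p : ℕ) (f g : PowerSeries F) :
    phiF p (f + g) = phiF p f + phiF p g := by
  ext n
  simp only [coeff_phiF, map_add]
  split <;> simp

theorem phiF_sub (p : ℕ) (f g : PowerSeries F) :
    phiF p (f - g) = phiF p f - phiF p g := by
  ext n
  simp only [coeff_phiF, map_sub]
  split <;> simp

theorem phiF_mul (p : ℕ) (hp : p ≠ 0) (f g : PowerSeries F) :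
    phiF p (f * g) = phiF p f * phiF p g := by
  have hppos := Nat.pos_of_ne_zero hp
  have hdvd : ∀ a : ℕ × ℕ, coeff a.1 (phiF p f) * coeff a.2 (phiF p g) ≠ 0 →
      p ∣ a.1 ∧ p ∣ a.2 := by
    intro a hne
    constructor
    · by_contra hc
      rw [coeff_phiF, if_neg hc, zero_mul] at hne; exact hne rfl
    · by_contra hc
      rw [coeff_phiF p g, if_neg hc, mul_zero] at hne; exact hne rfl
  ext n
  rw [coeff_mul, coeff_phiF]
  by_cases hn : p ∣ n
  · obtain ⟨m, rfl⟩ := hn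
    rw [if_pos ⟨m, rfl⟩, Nat.mul_div_cancel_left _ hppos, coeff_mul]
    symm
    refine Finset.sum_bij_ne_zero (fun a _ _ => (a.1 / p, a.2 / p)) ?_ ?_ ?_ ?_
    · intro a ha hne
      obtain ⟨h1, h2⟩ := hdvd a hne
      simp only [Finset.HasAntidiagonal.mem_antidiagonal] at ha ⊢
      obtain ⟨i, hi⟩ := h1
      obtain ⟨j, hj⟩ := h2
      have : p * (i + j) = p * m := by rw [Nat.mul_add, ← hi, ← hj, ha]
      have := Nat.eq_of_mul_eq_mul_left hppos this
      rw [hi, hj, Nat.mul_div_cancel_left _ hppos, Nat.mul_div_cancel_left _ hppos, this]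
    · intro a ha1 ha2 b hb1 hb2 hab
      obtain ⟨ha3, ha4⟩ := hdvd a ha2
      obtain ⟨hb3, hb4⟩ := hdvd b hb2
      have h1 := congrArg Prod.fst hab
      have h2 := congrArg Prod.snd hab
      simp only at h1 h2
      have e1 : a.1 = b.1 := by
        obtain ⟨i, hi⟩ := ha3; obtain ⟨j, hj⟩ := hb3
        rw [hi, hj, Nat.mul_div_cancel_left _ hppos, Nat.mul_div_cancel_left _ hppos] at h1
        rw [hi, hj, h1]
      have e2 : a.2 = b.2 := by
        obtain ⟨i, hi⟩ := ha4; obtain ⟨j, hj⟩ := hb4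
        rw [hi, hj, Nat.mul_div_cancel_left _ hppos, Nat.mul_div_cancel_left _ hppos] at h2
        rw [hi, hj, h2]
      exact Prod.ext e1 e2
    · intro b hb hbne
      refine ⟨(p * b.1, p * b.2), ?_, ?_, ?_⟩
      · simp only [Finset.HasAntidiagonal.mem_antidiagonal] at hb ⊢
        rw [← Nat.mul_add, hb]
      · rw [coeff_phiF_mul p hp, coeff_phiF_mul p hp]; exact hbne
      · simp [Nat.mul_div_cancel_left _ hppos]
    · intro a ha hne
      obtain ⟨h1, h2⟩ := hdvd a hne
      obtain ⟨i, hi⟩ := h1; obtain ⟨j, hj⟩ := h2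
      simp only [hi, hj, coeff_phiF_mul p hp, Nat.mul_div_cancel_left _ hppos]
  · rw [if_neg hn]
    symm
    refine Finset.sum_eq_zero fun x hx => ?_
    simp only [Finset.HasAntidiagonal.mem_antidiagonal] at hx
    by_cases h1 : p ∣ x.1
    · have h2 : ¬ p ∣ x.2 := fun h2 => hn (hx ▸ Nat.dvd_add h1 h2)
      rw [coeff_phiF p g, if_neg h2, mul_zero]
    · rw [coeff_phiF p f, if_neg h1, zero_mul]

theorem phiF_C (p : ℕ) (hp : p ≠ 0) (c : F) : phiF p (C c) = C c := by
  ext n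
  rw [coeff_phiF]
  rcases Nat.eq_zero_or_pos n with rfl | hn
  · simp
  · by_cases hd : p ∣ n
    · have hpn := Nat.le_of_dvd hn hd
      have h2 : ¬ n / p = 0 := by
        have := (Nat.one_le_div_iff (Nat.pos_of_ne_zero hp)).mpr hpn
        omega
      simp [hd, coeff_C, h2, hn.ne']
    · simp [hd, coeff_C, hn.ne']

theorem phiF_one (p : ℕ) (hp : p ≠ 0) : phiF p (1 : PowerSeries F) = 1 := by
  rw [← map_one (C (R := F)), phiF_C p hp, map_one]

theorem phiF_natCast (p : ℕ) (hp : p ≠ 0) (m : ℕ) :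
    phiF p ((m : PowerSeries F)) = (m : PowerSeries F) := by
  rw [← map_natCast (C (R := F)) m, phiF_C p hp]

theorem phiF_X (p : ℕ) (hp : p ≠ 0) : phiF p (X : PowerSeries F) = X ^ p := by
  have hppos := Nat.pos_of_ne_zero hp
  ext n
  rw [coeff_X_pow, coeff_phiF]
  by_cases hd : p ∣ n
  · obtain ⟨m, rfl⟩ := hd
    rw [if_pos ⟨m, rfl⟩, Nat.mul_div_cancel_left _ hppos, coeff_X]
    by_cases hm : m = 1
    · subst hm; simp
    · rw [if_neg hm, if_neg (fun hc : p * m = p => hm (Nat.eq_of_mul_eq_mul_left hppos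
        (by rw [hc, Nat.mul_one])))]
  · rw [if_neg hd, if_neg (fun hc : n = p => hd (hc ▸ dvd_refl p))]

theorem phiF_pow (p : ℕ) (hp : p ≠ 0) (f : PowerSeries F) (k : ℕ) :
    phiF p (f ^ k) = (phiF p f) ^ k := by
  induction k with
  | zero => simpa using phiF_one p hp
  | succ k ih => rw [pow_succ, phiF_mul p hp, ih, pow_succ]

theorem constantCoeff_phiF (p : ℕ) (f : PowerSeries F) :
    constantCoeff (phiF p f) = constantCoeff f := by
  have h0 := coeff_phiF (F := F) p f 0
  rw [if_pos (dvd_zero p), Nat.zero_div] at h0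
  rw [← coeff_zero_eq_constantCoeff]
  exact h0

theorem phiF_phiF (p : ℕ) (hp : p ≠ 0) (f : PowerSeries F) :
    phiF p (phiF p f) = phiF (p * p) f := by
  ext n
  simp only [coeff_phiF]
  by_cases hd : p * p ∣ n
  · have h1 : p ∣ n := dvd_trans (Dvd.intro p rfl) hd
    have h2 : p ∣ n / p := (Nat.dvd_div_iff_mul_dvd h1).mpr (by rwa [mul_comm] at hd ⊢)
    simp [h1, h2, hd, Nat.div_div_eq_div_mul]
  · by_cases h1 : p ∣ n
    · have h2 : ¬ p ∣ n / p := fun hc => hd (by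
        have := (Nat.dvd_div_iff_mul_dvd h1).mp hc
        rwa [mul_comm] at this)
      simp [h1, h2, hd]
    · simp [h1, hd]



theorem dWrt_eq (f : PowerSeries F) : dWrt f = derivativeFun f := by
  ext n
  rw [show derivativeFun f = derivative F f from rfl, coeff_derivative]
  simp only [dWrt, coeff_mk]
  push_cast
  ring

theorem dWrt_mul (f g : PowerSeries F) : dWrt (f * g) = f * dWrt g + g * dWrt f := by
  simp only [dWrt_eq, derivativeFun_mul, smul_eq_mul]

theorem dWrt_add (f g : PowerSeries F) : dWrt (f + g) = dWrt f + dWrt g := by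
  simp only [dWrt_eq, derivativeFun_add]

theorem dWrt_C (c : F) : dWrt (C c) = 0 := by
  rw [dWrt_eq]
  exact derivative_C (R := F) (r := c)

theorem dWrt_X : dWrt (X : PowerSeries F) = 1 := by
  rw [dWrt_eq]
  exact PowerSeries.derivative_X (R := F)

theorem dWrt_zero : dWrt (0 : PowerSeries F) = 0 := by
  ext n; simp [dWrt]

theorem dWrt_neg_one : dWrt (-1 : PowerSeries F) = 0 := by
  rw [show (-1 : PowerSeries F) = C (-1) by simp, dWrt_C]

theorem dWrt_pow (f : PowerSeries F) (k : ℕ) (hk : 1 ≤ k) :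
    dWrt (f ^ k) = (k : PowerSeries F) * f ^ (k - 1) * dWrt f := by
  induction k with
  | zero => omega
  | succ k ih =>
    rcases Nat.eq_zero_or_pos k with rfl | hk'
    · simp [dWrt_eq, derivativeFun_one]
    · rw [pow_succ, dWrt_mul, ih hk']
      have h1 : k + 1 - 1 = k := rfl
      have h2 : f ^ k = f ^ (k - 1) * f := by rw [← pow_succ]; congr 1; omega
      rw [h1]
      push_cast
      rw [h2]
      ring

theorem dWrt_phiF (p : ℕ) (hp : p ≠ 0) (f : PowerSeries F) :
    dWrt (phiF p f) = C (p : F) * X ^ (p - 1) * phiF p (dWrt f) := by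
  have hppos := Nat.pos_of_ne_zero hp
  ext n
  have hrhs : coeff n (C (p : F) * X ^ (p - 1) * phiF p (dWrt f)) =
      (p : F) * coeff n (X ^ (p - 1) * phiF p (dWrt f)) := by
    rw [mul_assoc, coeff_C_mul]
  rw [hrhs]
  have hlhs : coeff n (dWrt (phiF p f)) = ((n : F) + 1) * coeff (n + 1) (phiF p f) := by
    simp [dWrt]
  rw [hlhs, coeff_phiF]
  by_cases hd : p ∣ n + 1
  · obtain ⟨m, hm⟩ := hd
    have hm1 : 1 ≤ m := by
      rcases Nat.eq_zero_or_pos m with rfl | hmm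
      · rw [Nat.mul_zero] at hm; omega
      · exact hmm
    have hpm : p ≤ p * m := Nat.le_mul_of_pos_right p hm1
    have hle : p - 1 ≤ n := by omega
    have hmsplit : p * m = p * (m - 1) + p := by
      have h1 : m = (m - 1) + 1 := by omega
      calc p * m = p * ((m - 1) + 1) := by rw [← h1]
        _ = p * (m - 1) + p := by ring
    rw [if_pos ⟨m, hm⟩, hm, Nat.mul_div_cancel_left _ hppos]
    rw [coeff_mul, Finset.sum_eq_single (p - 1, n - (p - 1))]
    · rw [coeff_X_pow, if_pos rfl, one_mul, coeff_phiF]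
      have hsub : n - (p - 1) = p * (m - 1) := by omega
      have hdw : coeff (m - 1) (dWrt f) = (((m - 1 : ℕ) : F) + 1) * coeff (m - 1 + 1) f := by
        simp [dWrt]
      have hm' : m - 1 + 1 = m := by omega
      rw [hsub, if_pos ⟨m - 1, rfl⟩, Nat.mul_div_cancel_left _ hppos, hdw, hm']
      have hnF : ((n : F) + 1) = (p : F) * (m : F) := by
        have hcongr := congrArg (Nat.cast : ℕ → F) hm
        push_cast at hcongr
        exact hcongr
      have hmF : ((m - 1 : ℕ) : F) + 1 = (m : F) := by
        rw [Nat.cast_sub hm1]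
        push_cast
        ring
      rw [hmF, hnF]
      ring
    · intro b hb hbne
      simp only [Finset.HasAntidiagonal.mem_antidiagonal] at hb
      rw [coeff_X_pow]
      rcases Nat.lt_trichotomy b.1 (p - 1) with hlt | heq | hgt
      · rw [if_neg hlt.ne, zero_mul]
      · exact absurd (Prod.ext heq (by omega)) hbne
      · rw [if_neg hgt.ne', zero_mul]
    · intro hmem
      exact absurd (Finset.HasAntidiagonal.mem_antidiagonal.mpr (by omega)) hmem
  · rw [if_neg hd]
    by_cases hle : p - 1 ≤ n
    · rw [coeff_mul, Finset.sum_eq_single (p - 1, n - (p - 1))]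
      · have hnd : ¬ p ∣ n - (p - 1) := by
          rintro ⟨k, hk⟩
          exact hd ⟨k + 1, by rw [Nat.mul_add, Nat.mul_one, ← hk]; omega⟩
        rw [coeff_phiF, if_neg hnd, mul_zero, mul_zero, mul_zero]
      · intro b hb hbne
        simp only [Finset.HasAntidiagonal.mem_antidiagonal] at hb
        rw [coeff_X_pow]
        rcases Nat.lt_trichotomy b.1 (p - 1) with hlt | heq | hgt
        · rw [if_neg hlt.ne, zero_mul]
        · exact absurd (Prod.ext heq (by omega)) hbne
        · rw [if_neg hgt.ne', zero_mul]
      · intro hmem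
        exact absurd (Finset.HasAntidiagonal.mem_antidiagonal.mpr (by omega)) hmem
    · have hz : ∀ b ∈ Finset.HasAntidiagonal.antidiagonal n,
          coeff b.1 ((X : PowerSeries F) ^ (p - 1)) * coeff b.2 (phiF p (dWrt f)) = 0 := by
        intro b hb
        simp only [Finset.HasAntidiagonal.mem_antidiagonal] at hb
        rw [coeff_X_pow, if_neg (by omega), zero_mul]
      rw [coeff_mul, Finset.sum_eq_zero hz, mul_zero, mul_zero]

theorem phiF_zero {F : Type*} [Field F] (p : ℕ) : phiF p (0 : PowerSeries F) = 0 := by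
  ext n; simp [phiF]

theorem phiF_unique {F : Type*} [Field F] (p : ℕ) (hp : 2 ≤ p) (A f g : PowerSeries F)
    (hf : f = A * phiF p f) (hg : g = A * phiF p g)
    (h0 : constantCoeff f = constantCoeff g) : f = g := by
  have hd : f - g = A * phiF p (f - g) := by
    rw [phiF_sub, mul_sub, ← hf, ← hg]
  have hzero : coeff 0 (f - g) = 0 := by
    simp [coeff_zero_eq_constantCoeff, h0]
  have hsuff : ∀ n, coeff n (f - g) = 0 := by
    intro n
    induction n using Nat.strong_induction_on with
    | _ n ih =>
      rcases Nat.eq_zero_or_pos n with rfl | hn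
      · exact hzero
      · conv_lhs => rw [hd]
        rw [coeff_mul]
        refine Finset.sum_eq_zero fun x hx => ?_
        simp only [Finset.HasAntidiagonal.mem_antidiagonal] at hx
        rw [coeff_phiF]
        by_cases hj : p ∣ x.2
        · rw [if_pos hj]
          rcases Nat.eq_zero_or_pos x.2 with h2 | h2
          · rw [h2, Nat.zero_div, hzero, mul_zero]
          · have hlt : x.2 / p < n :=
              lt_of_lt_of_le (Nat.div_lt_self h2 (by omega)) (by omega)
            rw [ih _ hlt, mul_zero]
        · rw [if_neg hj, mul_zero]
  have : f - g = 0 := by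
    ext n; simp [hsuff n]
  exact sub_eq_zero.mp this

end Stmt5Aux

open Stmt5Aux

/-- with `C₀ = [[0,-1],[E^h,0]]` and
`B = [[h u λ_+ λ_-', 0],[0, h u λ_- λ_+']]`, the monodromy relation
`N_∇(C₀) + B C₀ = p (E/c₀) C₀ φ(B)` holds, where `N_∇(f) = -u λ f'`. -/
theorem stmt_5 {F : Type*} [Field F] [CharZero F] (p : ℕ) (hp : p.Prime)
    (h : ℕ) (hh : 1 ≤ h)
    (E lam lamP lamM : PowerSeries F)
    (hE : E = PowerSeries.X + PowerSeries.C (p : F))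
    (hlam0 : PowerSeries.constantCoeff lam = 1)
    (hlam : lam = E * PowerSeries.C (p : F)⁻¹ * phiF p lam)
    (hlamP0 : PowerSeries.constantCoeff lamP = 1)
    (hlamP : lamP = E * PowerSeries.C (p : F)⁻¹ * phiF p (phiF p lamP))
    (hlamM0 : PowerSeries.constantCoeff lamM = 1)
    (hlamM : lamM = phiF p E * PowerSeries.C (p : F)⁻¹ * phiF p (phiF p lamM)) :
    (!![0, -1; E ^ h, 0] : Matrix (Fin 2) (Fin 2) (PowerSeries F)).map
        (fun f => -(PowerSeries.X * lam * dWrt f)) +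
      (!![(h : PowerSeries F) * PowerSeries.X * lamP * dWrt lamM, 0;
          0, (h : PowerSeries F) * PowerSeries.X * lamM * dWrt lamP] :
        Matrix (Fin 2) (Fin 2) (PowerSeries F)) * !![0, -1; E ^ h, 0] =
    ((p : PowerSeries F) * E * PowerSeries.C (p : F)⁻¹) •
      ((!![0, -1; E ^ h, 0] : Matrix (Fin 2) (Fin 2) (PowerSeries F)) *
        (!![(h : PowerSeries F) * PowerSeries.X * lamP * dWrt lamM, 0;
            0, (h : PowerSeries F) * PowerSeries.X * lamM * dWrt lamP]).map (phiF p)) := by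

  have hpne : p ≠ 0 := hp.ne_zero
  have hp2 : 2 ≤ p := hp.two_le
  have hpF : (p : F) ≠ 0 := Nat.cast_ne_zero.mpr hpne
  have hCinv : C (p : F) * C (p : F)⁻¹ = 1 := by
    rw [← map_mul, mul_inv_cancel₀ hpF, map_one]
  have hCp : (C (p : F)) ≠ 0 := by
    intro hc
    have hcc := congrArg (constantCoeff) hc
    simp at hcc
    exact hpne hcc
  have hscal : (p : PowerSeries F) * E * C (p : F)⁻¹ = E := by
    have h1 : (p : PowerSeries F) * E * C (p : F)⁻¹
        = (C (p : F) * C (p : F)⁻¹) * E := by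
      rw [← map_natCast (C (R := F)) p]; ring
    rw [h1, hCinv, one_mul]
  -- λ₋ = φ(λ₊)
  have hPM : phiF p lamP = phiF p E * C (p : F)⁻¹ * phiF p (phiF p (phiF p lamP)) := by
    conv_lhs => rw [hlamP]
    rw [phiF_mul p hpne, phiF_mul p hpne, phiF_C p hpne]
  have hA : lamM = phiF p lamP := by
    refine phiF_unique (p * p) (by nlinarith) (phiF p E * C (p : F)⁻¹) _ _ ?_ ?_ ?_
    · rw [← phiF_phiF p hpne]; exact hlamM
    · rw [← phiF_phiF p hpne]; exact hPM
    · rw [hlamM0, constantCoeff_phiF, hlamP0]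
  -- λ = λ₊ λ₋
  have hlam2 : lam = (E * C (p : F)⁻¹ * (phiF p E * C (p : F)⁻¹)) * phiF (p * p) lam := by
    calc lam = E * C (p : F)⁻¹ * phiF p lam := hlam
      _ = E * C (p : F)⁻¹ * phiF p (E * C (p : F)⁻¹ * phiF p lam) := by
          conv_lhs => rw [hlam]
      _ = _ := by
          rw [phiF_mul p hpne, phiF_mul p hpne, phiF_C p hpne, phiF_phiF p hpne]; ring
  have hpm2 : lamP * lamM
      = (E * C (p : F)⁻¹ * (phiF p E * C (p : F)⁻¹)) * phiF (p * p) (lamP * lamM) := by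
    conv_lhs => rw [hlamP, hlamM]
    rw [phiF_mul (p * p) (by positivity), ← phiF_phiF p hpne lamP, ← phiF_phiF p hpne lamM]
    ring
  have hB : lam = lamP * lamM := by
    refine phiF_unique (p * p) (by nlinarith) _ _ _ hlam2 hpm2 ?_
    rw [hlam0, map_mul, hlamP0, hlamM0, mul_one]
  -- p λ₊ = E φ(λ₋)
  have hC : C (p : F) * lamP = E * phiF p lamM := by
    have h1 : lamP = E * C (p : F)⁻¹ * phiF p lamM := by rw [hA]; exact hlamP
    have h2 : C (p : F) * (E * C (p : F)⁻¹ * phiF p lamM)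
        = (C (p : F) * C (p : F)⁻¹) * (E * phiF p lamM) := by ring
    rw [h1, h2, hCinv, one_mul]
  have hdE : dWrt E = 1 := by rw [hE, dWrt_add, dWrt_X, dWrt_C, add_zero]
  have hD : E * dWrt (phiF p lamM) = C (p : F) * dWrt lamP - phiF p lamM := by
    have h2 := congrArg dWrt hC
    rw [dWrt_mul, dWrt_mul, dWrt_C, hdE, mul_zero, add_zero, mul_one] at h2
    linear_combination -h2
  have hEdM : E * (C (p : F) * X ^ (p - 1) * phiF p (dWrt lamM))
      = C (p : F) * dWrt lamP - phiF p lamM := by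
    rw [← dWrt_phiF p hpne]; exact hD
  have hxp : (X : PowerSeries F) ^ p = X * X ^ (p - 1) := by
    conv_lhs => rw [show p = 1 + (p - 1) by omega]
    rw [pow_add, pow_one]
  have hdphiP : dWrt lamM = C (p : F) * X ^ (p - 1) * phiF p (dWrt lamP) := by
    rw [hA, dWrt_phiF p hpne]
  have hEh : E ^ h = E * E ^ (h - 1) := by
    conv_lhs => rw [show h = 1 + (h - 1) by omega]
    rw [pow_add, pow_one]
  have hdEh : dWrt (E ^ h) = (h : PowerSeries F) * E ^ (h - 1) := by
    rw [dWrt_pow E h hh, hdE, mul_one]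
  -- key identity 1
  have key1 : (h : PowerSeries F) * X * lamP * dWrt lamM
      = E * phiF p ((h : PowerSeries F) * X * lamM * dWrt lamP) := by
    apply mul_left_cancel₀ hCp
    rw [phiF_mul p hpne, phiF_mul p hpne, phiF_mul p hpne, phiF_natCast p hpne,
      phiF_X p hpne, hdphiP, hxp]
    linear_combination (C (p : F) * (h : PowerSeries F) * X * X ^ (p - 1)
      * phiF p (dWrt lamP)) * hC
  -- key identity 2
  have key2 : -(X * lam * dWrt (E ^ h)) + (h : PowerSeries F) * X * lamM * dWrt lamP * E ^ h
      = E * (E ^ h * phiF p ((h : PowerSeries F) * X * lamP * dWrt lamM)) := by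
    apply mul_left_cancel₀ hCp
    rw [phiF_mul p hpne, phiF_mul p hpne, phiF_mul p hpne, phiF_natCast p hpne,
      phiF_X p hpne, ← hA, hxp, hdEh, hEh]
    linear_combination (-(C (p : F)) * (h : PowerSeries F) * X * E ^ (h - 1)) * hB
      + (-(h : PowerSeries F) * X * E ^ (h - 1) * lamM) * hC
      + (-(h : PowerSeries F) * X * E ^ (h - 1) * lamM * E) * hEdM
  refine Matrix.ext fun i j => ?_
  fin_cases i <;> fin_cases j <;>
    simp [Matrix.mul_apply, Matrix.vecMul, dotProduct, Fin.sum_univ_two,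
      Matrix.smul_apply, Matrix.map_apply, dWrt_zero, dWrt_neg_one, phiF_zero, hscal,
      smul_eq_mul]
  · linear_combination key1
  · linear_combination key2
end
end

section
/- With notation as in the monodromy relation for the rank-two module (E(u)=u+p, c_0=p, λ = λ_+λ_-, λ_{++} = (c_0/E)λ_+, B = [[h u λ_+ λ_-', 0],[0, h u λ_- λ_+']], C_0 = [[0,-1],[E^h,0]]): for ζ ∈ F[[u]], the matrix C = [[ζ, -1],[E^h, 0]] satisfies N_∇(C) + B C = p(E/c_0) C φ(B) if and only if ζ is a solution of the differential equation h u (E/c_0)(λ_- λ_{++}' - λ_{++} λ_-') ζ + u λ ζ' = 0, if and only if ζ = a (λ_- /λ_{++})^h for some constant a ∈ F. -/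
open PowerSeries Filter

noncomputable section

section Aux
variable {F : Type*} [Field F]

lemma coeff_phiF (p : ℕ) (f : PowerSeries F) (n : ℕ) :
    PowerSeries.coeff n (phiF p f) = if p ∣ n then PowerSeries.coeff (n / p) f else 0 := by
  simp [phiF]

lemma constantCoeff_phiF (p : ℕ) (f : PowerSeries F) :
    PowerSeries.constantCoeff (phiF p f) = PowerSeries.constantCoeff f := by
  have := coeff_phiF p f 0
  simpa [PowerSeries.coeff_zero_eq_constantCoeff] using this

lemma phiF_mul {p : ℕ} (hp : 0 < p) (f g : PowerSeries F) :
    phiF p (f * g) = phiF p f * phiF p g := by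
  ext n
  rw [PowerSeries.coeff_mul]; simp only [coeff_phiF]

  split_ifs with hd
  · obtain ⟨m, rfl⟩ := hd
    rw [Nat.mul_div_cancel_left _ hp, PowerSeries.coeff_mul]
    symm
    refine Finset.sum_bij_ne_zero (fun x _ _ => (x.1 / p, x.2 / p)) ?_ ?_ ?_ ?_
    · intro x h1 h2
      simp only [Finset.HasAntidiagonal.mem_antidiagonal] at h1 ⊢
      have d1 : p ∣ x.1 := by by_contra hc; simp [hc] at h2
      have d2 : p ∣ x.2 := by by_contra hc; simp [hc] at h2
      obtain ⟨a, ha⟩ := d1; obtain ⟨b, hb⟩ := d2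
      rw [ha, hb, Nat.mul_div_cancel_left _ hp, Nat.mul_div_cancel_left _ hp]
      have : p * (a + b) = p * m := by rw [Nat.mul_add, ← ha, ← hb]; exact h1
      exact Nat.eq_of_mul_eq_mul_left hp this
    · intro x h1 h2 y h3 h4 he
      have d1 : p ∣ x.1 := by by_contra hc; simp [hc] at h2
      have d2 : p ∣ x.2 := by by_contra hc; simp [hc] at h2
      have d3 : p ∣ y.1 := by by_contra hc; simp [hc] at h4
      have d4 : p ∣ y.2 := by by_contra hc; simp [hc] at h4
      have e1 : x.1 / p = y.1 / p := congrArg Prod.fst he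
      have e2 : x.2 / p = y.2 / p := congrArg Prod.snd he
      have hxy1 : x.1 = y.1 := by
        rw [← Nat.div_mul_cancel d1, ← Nat.div_mul_cancel d3, e1]
      have hxy2 : x.2 = y.2 := by
        rw [← Nat.div_mul_cancel d2, ← Nat.div_mul_cancel d4, e2]
      exact Prod.ext hxy1 hxy2
    · intro y hy hgy
      refine ⟨(p * y.1, p * y.2), ?_, ?_, ?_⟩
      · simp only [Finset.HasAntidiagonal.mem_antidiagonal] at hy ⊢
        rw [← Nat.mul_add, hy]
      · simpa [Nat.mul_div_cancel_left _ hp, Dvd.intro] using hgy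
      · simp [Nat.mul_div_cancel_left _ hp]
    · intro x h1 h2
      have d1 : p ∣ x.1 := by by_contra hc; simp [hc] at h2
      have d2 : p ∣ x.2 := by by_contra hc; simp [hc] at h2
      simp [d1, d2]
  · symm
    refine Finset.sum_eq_zero fun x hx => ?_
    simp only [Finset.HasAntidiagonal.mem_antidiagonal] at hx
    split_ifs with h1 h2
    · exact absurd (hx ▸ Nat.dvd_add h1 h2) hd
    · simp
    · simp
    · simp

lemma phiF_C {p : ℕ} (hp : 0 < p) (a : F) : phiF p (PowerSeries.C a) = PowerSeries.C a := by
  ext n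
  rw [coeff_phiF, PowerSeries.coeff_C, PowerSeries.coeff_C]
  rcases Nat.eq_zero_or_pos n with rfl | hn
  · simp
  · rw [if_neg hn.ne']
    split_ifs with h1 h2
    · exfalso
      have hn0 : n = 0 := by rw [← Nat.div_mul_cancel h1, h2, zero_mul]
      exact hn.ne' hn0
    · rfl
    · rfl

lemma phiF_X {p : ℕ} (hp : 0 < p) : phiF p (PowerSeries.X : PowerSeries F) = PowerSeries.X ^ p := by
  ext n
  rw [coeff_phiF, PowerSeries.coeff_X_pow, PowerSeries.coeff_X]
  by_cases hpn : n = p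
  · subst hpn
    simp [Nat.div_self hp]
  · rw [if_neg hpn]
    split_ifs with h1 h2
    · exfalso
      apply hpn
      rw [← Nat.div_mul_cancel h1, h2, one_mul]
    · rfl
    · rfl

lemma phiF_one {p : ℕ} (hp : 0 < p) : phiF p (1 : PowerSeries F) = 1 := by
  have := phiF_C (F := F) hp 1
  simpa using this


lemma dWrt_eq (f : PowerSeries F) : dWrt f = PowerSeries.derivative F f := by
  ext n
  simp [dWrt, PowerSeries.coeff_derivative, mul_comm]

lemma coeff_dWrt (f : PowerSeries F) (n : ℕ) :
    PowerSeries.coeff n (dWrt f) = ((n : F) + 1) * PowerSeries.coeff (n + 1) f := by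
  simp [dWrt]

lemma dWrt_mul (f g : PowerSeries F) : dWrt (f * g) = dWrt f * g + f * dWrt g := by
  simp only [dWrt_eq, Derivation.leibniz, smul_eq_mul]
  ring

lemma dWrt_add (f g : PowerSeries F) : dWrt (f + g) = dWrt f + dWrt g := by
  simp [dWrt_eq]

lemma dWrt_C (a : F) : dWrt (PowerSeries.C a) = 0 := by simp [dWrt_eq]

lemma dWrt_X : dWrt (PowerSeries.X : PowerSeries F) = 1 := by simp [dWrt_eq]

lemma dWrt_pow (f : PowerSeries F) (n : ℕ) :
    dWrt (f ^ (n + 1)) = (n + 1 : PowerSeries F) * f ^ n * dWrt f := by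
  simp only [dWrt_eq, Derivation.leibniz_pow, Nat.add_sub_cancel, nsmul_eq_mul, smul_eq_mul]
  push_cast
  ring

lemma eq_C_of_dWrt [CharZero F] (f : PowerSeries F) (hd : dWrt f = 0) :
    f = PowerSeries.C (PowerSeries.constantCoeff f) := by
  ext n
  cases n with
  | zero => simp
  | succ n =>
    have := congrArg (PowerSeries.coeff n) hd
    simp only [coeff_dWrt, map_zero] at this
    have hne : ((n : F) + 1) ≠ 0 := by
      have : ((n + 1 : ℕ) : F) ≠ 0 := Nat.cast_ne_zero.mpr (Nat.succ_ne_zero n)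
      push_cast at this; exact this
    have := (mul_eq_zero.mp this).resolve_left hne
    simp [this, PowerSeries.coeff_C]

lemma X_dWrt_phiF {p : ℕ} (hp : 0 < p) (f : PowerSeries F) :
    PowerSeries.X * dWrt (phiF p f) =
      PowerSeries.C (p : F) * (PowerSeries.X ^ p * phiF p (dWrt f)) := by
  ext n
  rw [PowerSeries.coeff_C_mul, PowerSeries.coeff_X_pow_mul']
  cases n with
  | zero =>
    rw [PowerSeries.coeff_zero_X_mul, if_neg (by omega)]
    ring
  | succ n =>
    rw [PowerSeries.coeff_succ_X_mul, coeff_dWrt, coeff_phiF]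
    split_ifs with h1 h2 h3
    · -- p ∣ n+1 and p ≤ n+1
      obtain ⟨k, hk⟩ := h1
      have hk1 : 1 ≤ k := by
        rcases Nat.eq_zero_or_pos k with rfl | h
        · rw [Nat.mul_zero] at hk; omega
        · exact h
      have hmul : p * (k - 1) = p * k - p := by
        rw [Nat.mul_sub, Nat.mul_one]
      have hsub : n + 1 - p = p * (k - 1) := by omega
      rw [coeff_phiF, if_pos ⟨k - 1, hsub⟩, coeff_dWrt]
      have e1 : (n + 1 - p) / p = k - 1 := by
        rw [hsub, Nat.mul_div_cancel_left _ hp]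
      have e2 : (n + 1) / p = k := by rw [hk, Nat.mul_div_cancel_left _ hp]
      rw [e1, e2, show k - 1 + 1 = k by omega]
      have : ((n : F) + 1) = (p : F) * ((k - 1 : ℕ) + 1 : F) := by
        have : ((n + 1 : ℕ) : F) = ((p * k : ℕ) : F) := by rw [hk]
        push_cast at this
        rw [this]
        have : ((k - 1 : ℕ) : F) = (k : F) - 1 := by
          rw [Nat.cast_sub hk1]; simp
        rw [this]; ring
      rw [this]; ring
    · -- p ∣ n+1 but ¬ p ≤ n+1 : impossible
      exfalso
      obtain ⟨k, hk⟩ := h1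
      have hk1 : 1 ≤ k := by
        rcases Nat.eq_zero_or_pos k with rfl | h
        · rw [Nat.mul_zero] at hk; omega
        · exact h
      have : p * 1 ≤ p * k := Nat.mul_le_mul_left p hk1
      rw [Nat.mul_one] at this
      omega
    · -- ¬ p ∣ n+1 but p ≤ n+1 and need p ∣ n+1-p for nonzero
      rw [coeff_phiF, if_neg (by
        intro ⟨k, hk⟩
        refine h1 ⟨k + 1, ?_⟩
        have : p * (k + 1) = p * k + p := by rw [Nat.mul_add, Nat.mul_one]
        omega)]
      ring
    · ring

lemma vanish_of_rec (A g : PowerSeries F) (Φ : PowerSeries F → PowerSeries F)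
    (hΦ : ∀ x : PowerSeries F, ∀ j : ℕ, PowerSeries.coeff j (Φ x) ≠ 0 →
      ∃ m, PowerSeries.coeff m x ≠ 0 ∧ 2 * m ≤ j)
    (h0 : PowerSeries.constantCoeff g = 0) (hrec : g = A * Φ g) : g = 0 := by
  classical
  by_contra hne
  have hex : ∃ n, PowerSeries.coeff n g ≠ 0 := by
    by_contra hc
    push_neg at hc
    exact hne (PowerSeries.ext fun n => by simp [hc n])
  set n := Nat.find hex with hndef
  have hn : PowerSeries.coeff n g ≠ 0 := Nat.find_spec hex
  have hmin : ∀ m, m < n → PowerSeries.coeff m g = 0 := fun m hm =>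
    not_not.mp (Nat.find_min hex hm)
  have hn1 : 1 ≤ n := by
    rcases Nat.eq_zero_or_pos n with h | h
    · exfalso
      apply hn
      rw [h, PowerSeries.coeff_zero_eq_constantCoeff]
      exact h0
    · exact h
  apply hn
  rw [hrec, PowerSeries.coeff_mul]
  refine Finset.sum_eq_zero fun x hx => ?_
  simp only [Finset.HasAntidiagonal.mem_antidiagonal] at hx
  rcases eq_or_ne (PowerSeries.coeff x.2 (Φ g)) 0 with h | h
  · rw [h, mul_zero]
  · exfalso
    obtain ⟨m, hm, hm2⟩ := hΦ g x.2 h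
    have : ¬ m < n := fun hc => hm (hmin m hc)
    omega

lemma phiF_shrink {p : ℕ} (hp : 2 ≤ p) (x : PowerSeries F) (j : ℕ)
    (h : PowerSeries.coeff j (phiF p x) ≠ 0) :
    ∃ m, PowerSeries.coeff m x ≠ 0 ∧ 2 * m ≤ j := by
  rw [coeff_phiF] at h
  split_ifs at h with hd
  · obtain ⟨k, rfl⟩ := hd
    refine ⟨k, by rwa [Nat.mul_div_cancel_left _ (by omega)] at h, Nat.mul_le_mul_right k hp⟩
  · exact absurd rfl h

lemma phiF_phiF_shrink {p : ℕ} (hp : 2 ≤ p) (x : PowerSeries F) (j : ℕ)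
    (h : PowerSeries.coeff j (phiF p (phiF p x)) ≠ 0) :
    ∃ m, PowerSeries.coeff m x ≠ 0 ∧ 2 * m ≤ j := by
  obtain ⟨m1, hm1, hle1⟩ := phiF_shrink hp (phiF p x) j h
  obtain ⟨m, hm, hle⟩ := phiF_shrink hp x m1 hm1
  exact ⟨m, hm, by omega⟩

lemma phiF_sub (p : ℕ) (f g : PowerSeries F) : phiF p (f - g) = phiF p f - phiF p g := by
  ext n
  simp only [coeff_phiF, map_sub]
  split_ifs <;> simp

lemma dWrt_one : dWrt (1 : PowerSeries F) = 0 := by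
  have := dWrt_C (F := F) 1
  simpa using this

lemma dWrt_neg (f : PowerSeries F) : dWrt (-f) = - dWrt f := by
  simp [dWrt_eq]

lemma dWrt_neg_one : dWrt (-1 : PowerSeries F) = 0 := by
  rw [dWrt_neg, dWrt_one, neg_zero]

lemma dWrt_zero : dWrt (0 : PowerSeries F) = 0 := by
  simp [dWrt_eq]


lemma dWrt_C_mul (a : F) (f : PowerSeries F) :
    dWrt (PowerSeries.C a * f) = PowerSeries.C a * dWrt f := by
  rw [dWrt_mul, dWrt_C]
  ring

end Aux

/-- for `ζ ∈ F[[u]]`, `C = [[ζ,-1],[E^h,0]]` satisfies the monodromy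
relation `N_∇(C) + B C = p(E/c₀) C φ(B) iff `ζ` solves
`h u (E/c₀)(λ_- λ_{++}' - λ_{++} λ_-') ζ + u λ ζ' = 0` iff `ζ = a (λ_- / λ_{++})^h`
for some `a ∈ F`. -/
theorem stmt_6 {F : Type*} [Field F] [CharZero F] (p : ℕ) (hp : p.Prime)
    (h : ℕ) (hh : 1 ≤ h)
    (E lam lamP lamM lamPP : PowerSeries F)
    (hE : E = PowerSeries.X + PowerSeries.C (p : F))
    (hlam0 : PowerSeries.constantCoeff lam = 1)
    (hlam : lam = E * PowerSeries.C (p : F)⁻¹ * phiF p lam)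
    (hlamP0 : PowerSeries.constantCoeff lamP = 1)
    (hlamP : lamP = E * PowerSeries.C (p : F)⁻¹ * phiF p (phiF p lamP))
    (hlamM0 : PowerSeries.constantCoeff lamM = 1)
    (hlamM : lamM = phiF p E * PowerSeries.C (p : F)⁻¹ * phiF p (phiF p lamM))
    (hlamPP : lamPP = PowerSeries.C (p : F) * E⁻¹ * lamP)
    (ζ : PowerSeries F) :
    ((!![ζ, -1; E ^ h, 0] : Matrix (Fin 2) (Fin 2) (PowerSeries F)).map
          (fun f => -(PowerSeries.X * lam * dWrt f)) +
        (!![(h : PowerSeries F) * PowerSeries.X * lamP * dWrt lamM, 0;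
            0, (h : PowerSeries F) * PowerSeries.X * lamM * dWrt lamP] :
          Matrix (Fin 2) (Fin 2) (PowerSeries F)) * !![ζ, -1; E ^ h, 0] =
      ((p : PowerSeries F) * E * PowerSeries.C (p : F)⁻¹) •
        ((!![ζ, -1; E ^ h, 0] : Matrix (Fin 2) (Fin 2) (PowerSeries F)) *
          (!![(h : PowerSeries F) * PowerSeries.X * lamP * dWrt lamM, 0;
              0, (h : PowerSeries F) * PowerSeries.X * lamM * dWrt lamP]).map (phiF p))
      ↔ (h : PowerSeries F) * PowerSeries.X * (E * PowerSeries.C (p : F)⁻¹) *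
          (lamM * dWrt lamPP - lamPP * dWrt lamM) * ζ +
          PowerSeries.X * lam * dWrt ζ = 0) ∧
    ((h : PowerSeries F) * PowerSeries.X * (E * PowerSeries.C (p : F)⁻¹) *
          (lamM * dWrt lamPP - lamPP * dWrt lamM) * ζ +
          PowerSeries.X * lam * dWrt ζ = 0
      ↔ ∃ a : F, ζ = PowerSeries.C a * (lamM * lamPP⁻¹) ^ h) := by
  have hp0 : 0 < p := hp.pos
  have hp2 : 2 ≤ p := hp.two_le
  have hpF : (p : F) ≠ 0 := Nat.cast_ne_zero.mpr hp.ne_zero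
  set Cp := PowerSeries.C (p : F) with hCpdef
  set Cpi := PowerSeries.C (p : F)⁻¹ with hCpidef
  have hCp : Cp * Cpi = 1 := by
    rw [hCpdef, hCpidef, ← map_mul, mul_inv_cancel₀ hpF, map_one]
  have hE0 : PowerSeries.constantCoeff E = (p : F) := by
    rw [hE, map_add, PowerSeries.constantCoeff_X, hCpdef, PowerSeries.constantCoeff_C, zero_add]
  have hEne : E ≠ 0 := fun hc => hpF (by rw [← hE0, hc, map_zero])
  have hEinv : E * E⁻¹ = 1 := PowerSeries.mul_inv_cancel _ (by rw [hE0]; exact hpF)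
  -- Step A : lamM = phiF p lamP
  have hBA : lamM = phiF p lamP := by
    have h1 : phiF p lamP = phiF p E * Cpi * phiF p (phiF p (phiF p lamP)) := by
      conv_lhs => rw [hlamP]
      rw [phiF_mul hp0, phiF_mul hp0, phiF_C hp0]
    have hg0 : PowerSeries.constantCoeff (lamM - phiF p lamP) = 0 := by
      rw [map_sub, hlamM0, constantCoeff_phiF, hlamP0, sub_self]

    have hgrec : lamM - phiF p lamP =
        (phiF p E * Cpi) * (phiF p (phiF p (lamM - phiF p lamP))) := by
      rw [phiF_sub, phiF_sub]
      linear_combination hlamM - h1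
    have := vanish_of_rec _ _ _ (phiF_phiF_shrink hp2) hg0 hgrec
    linear_combination this
  have hphiM2 : phiF p lamM = phiF p (phiF p lamP) := congrArg (phiF p) hBA
  -- Step B : lam = lamP * lamM
  have hAB : lam = lamP * lamM := by
    have h2 : lamP * lamM = E * Cpi * (phiF p lamP * phiF p lamM) := by
      rw [hphiM2]
      rw [hBA]
      linear_combination (phiF p lamP) * hlamP
    have hg0 : PowerSeries.constantCoeff (lam - lamP * lamM) = 0 := by
      rw [map_sub, map_mul, hlam0, hlamP0, hlamM0, one_mul, sub_self]
    have hgrec : lam - lamP * lamM = (E * Cpi) * (phiF p (lam - lamP * lamM)) := by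
      rw [phiF_sub, phiF_mul hp0]
      linear_combination hlam - h2
    have := vanish_of_rec _ _ _ (phiF_shrink hp2) hg0 hgrec
    linear_combination this
  -- Step C : phiF p lamM = lamPP
  have hd : E * lamPP = Cp * lamP := by
    rw [hlamPP]
    linear_combination (Cp * lamP) * hEinv
  have hc2 : E * phiF p (phiF p lamP) = Cp * lamP := by
    linear_combination (-(E * phiF p (phiF p lamP))) * hCp - Cp * hlamP
  have hC : phiF p lamM = lamPP :=
    mul_left_cancel₀ hEne (by rw [hphiM2, hc2, ← hd])
  -- derivative relations
  have hdE : dWrt E = 1 := by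
    rw [hE, dWrt_add, dWrt_X, hCpdef, dWrt_C, add_zero]
  have hchain : ∀ f : PowerSeries F, PowerSeries.X * dWrt (phiF p f) =
      Cp * (PowerSeries.X ^ p * phiF p (dWrt f)) := fun f => X_dWrt_phiF hp0 f
  have hg' : PowerSeries.X * dWrt lamM = Cp * (PowerSeries.X ^ p * phiF p (dWrt lamP)) := by
    rw [hBA]; exact hchain lamP
  have hlamP' : Cp * lamP = E * phiF p lamM := by
    rw [hphiM2]; exact hc2.symm
  have hstep : Cp * dWrt lamP = phiF p lamM + E * dWrt (phiF p lamM) := by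
    have h1 := congrArg dWrt hlamP'
    rw [dWrt_mul, dWrt_mul, hCpdef, dWrt_C, hdE] at h1
    linear_combination h1
  have hh' : Cp * (PowerSeries.X * dWrt lamP) =
      PowerSeries.X * phiF p lamM + Cp * E * (PowerSeries.X ^ p * phiF p (dWrt lamM)) := by
    linear_combination PowerSeries.X * hstep + E * (hchain lamM)
  have hh2 : PowerSeries.X * dWrt lamP =
      Cpi * (PowerSeries.X * lamPP) + E * (PowerSeries.X ^ p * phiF p (dWrt lamM)) := by
    rw [hC] at hh'
    linear_combination Cpi * hh' + (E * (PowerSeries.X ^ p * phiF p (dWrt lamM))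
      - PowerSeries.X * dWrt lamP) * hCp
  have hi' : lamPP + E * dWrt lamPP = Cp * dWrt lamP := by
    have h1 := congrArg dWrt hd
    rw [dWrt_mul, dWrt_mul, hCpdef, dWrt_C, hdE] at h1
    linear_combination h1
  -- phi of the diagonal entries
  have hpcast : ((p : ℕ) : PowerSeries F) = Cp := (map_natCast (PowerSeries.C) p).symm
  have hhcast : ((h : ℕ) : PowerSeries F) = PowerSeries.C ((h : ℕ) : F) :=
    (map_natCast (PowerSeries.C) h).symm
  have hphib1 : phiF p ((h : PowerSeries F) * PowerSeries.X * lamP * dWrt lamM)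
      = (h : PowerSeries F) * PowerSeries.X ^ p * phiF p lamP * phiF p (dWrt lamM) := by
    rw [phiF_mul hp0, phiF_mul hp0, phiF_mul hp0, phiF_X hp0, hhcast, phiF_C hp0]
  have hphib2 : phiF p ((h : PowerSeries F) * PowerSeries.X * lamM * dWrt lamP)
      = (h : PowerSeries F) * PowerSeries.X ^ p * phiF p lamM * phiF p (dWrt lamP) := by
    rw [phiF_mul hp0, phiF_mul hp0, phiF_mul hp0, phiF_X hp0, hhcast, phiF_C hp0]
  -- T1 : b1 = E * phi b2
  have hT1 : (h : PowerSeries F) * PowerSeries.X * lamP * dWrt lamM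
      = E * phiF p ((h : PowerSeries F) * PowerSeries.X * lamM * dWrt lamP) := by
    rw [hphib2, hC]
    linear_combination ((h : PowerSeries F) * lamP) * hg'
      - ((h : PowerSeries F) * PowerSeries.X ^ p * phiF p (dWrt lamP)) * hd
  -- T2 : entry (1,0)
  obtain ⟨k, rfl⟩ : ∃ k, h = k + 1 := ⟨h - 1, by omega⟩
  have hT2 : -(PowerSeries.X * lam * dWrt (E ^ (k + 1)))
      + ((k + 1 : ℕ) : PowerSeries F) * PowerSeries.X * lamM * dWrt lamP * E ^ (k + 1)
      = E * (E ^ (k + 1) *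
        phiF p (((k + 1 : ℕ) : PowerSeries F) * PowerSeries.X * lamP * dWrt lamM)) := by
    rw [hphib1, ← hBA, dWrt_pow, hdE]
    push_cast
    linear_combination ((k : PowerSeries F) + 1) * E ^ (k + 1) * lamM * hh2
      - ((k : PowerSeries F) + 1) * E ^ k * PowerSeries.X * hAB
      + ((k : PowerSeries F) + 1) * E ^ k * PowerSeries.X * Cpi * lamM * hd
      + ((k : PowerSeries F) + 1) * E ^ k * PowerSeries.X * lamP * lamM * hCp
  -- T3 : E * phi b1 - b1 = Dterm
  have hT3 : E * phiF p (((k + 1 : ℕ) : PowerSeries F) * PowerSeries.X * lamP * dWrt lamM)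
      - ((k + 1 : ℕ) : PowerSeries F) * PowerSeries.X * lamP * dWrt lamM
      = ((k + 1 : ℕ) : PowerSeries F) * PowerSeries.X * (E * Cpi)
        * (lamM * dWrt lamPP - lamPP * dWrt lamM) := by
    rw [hphib1, ← hBA]
    push_cast
    linear_combination ((k : PowerSeries F) + 1) * (-(lamM * hh2)
      + (PowerSeries.X * lamP * dWrt lamM - PowerSeries.X * lamM * dWrt lamP) * hCp
      - PowerSeries.X * Cpi * lamM * hi'
      + PowerSeries.X * Cpi * dWrt lamM * hd)
  -- additional facts
  have hXne : (PowerSeries.X : PowerSeries F) ≠ 0 := PowerSeries.X_ne_zero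
  have hCpine : Cpi ≠ 0 := fun hc => inv_ne_zero hpF (by
    have := congrArg (PowerSeries.constantCoeff) hc
    rwa [hCpidef, PowerSeries.constantCoeff_C, map_zero] at this)
  have hPP0 : PowerSeries.constantCoeff lamPP = 1 := by
    rw [hlamPP, map_mul, map_mul, hCpdef, PowerSeries.constantCoeff_C,
      PowerSeries.constantCoeff_inv, hE0, hlamP0, mul_one, mul_inv_cancel₀ hpF]
  have hPPne : lamPP ≠ 0 := fun hc => one_ne_zero (α := F) (by rw [← hPP0, hc, map_zero])
  have hMne : lamM ≠ 0 := fun hc => one_ne_zero (α := F) (by rw [← hlamM0, hc, map_zero])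
  have hPPinv : lamPP * lamPP⁻¹ = 1 :=
    PowerSeries.mul_inv_cancel _ (by rw [hPP0]; exact one_ne_zero)
  have hPPk : lamPP ^ (k + 1) * (lamPP⁻¹) ^ (k + 1) = 1 := by
    rw [← mul_pow, hPPinv, one_pow]
  have hphi0 : phiF p (0 : PowerSeries F) = 0 := by
    have := phiF_sub p (0 : PowerSeries F) 0
    simpa using this
  -- the ODE expression
  constructor
  · -- matrix equation ↔ ODE
    constructor
    · intro HM
      have h00 := congrFun (congrFun HM 0) 0
      simp only [Matrix.add_apply, Matrix.map_apply, Matrix.mul_apply, Matrix.smul_apply,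
        Fin.sum_univ_two, Matrix.of_apply, Matrix.cons_val', Matrix.cons_val_zero,
        Matrix.cons_val_one, Matrix.head_cons, Matrix.head_fin_const, Matrix.empty_val',
        Matrix.cons_val_fin_one, Fin.isValue, smul_eq_mul, hphi0] at h00
      linear_combination (-1 : PowerSeries F) * h00 - ζ * hT3
        - ζ * phiF p (((k+1 : ℕ) : PowerSeries F) * PowerSeries.X * lamP * dWrt lamM) * E * Cpi * hpcast
        - ζ * phiF p (((k+1 : ℕ) : PowerSeries F) * PowerSeries.X * lamP * dWrt lamM) * E * hCp
    · intro hODE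
      refine Matrix.ext fun i j => ?_
      fin_cases i <;> fin_cases j <;>
        simp only [Matrix.add_apply, Matrix.map_apply, Matrix.mul_apply, Matrix.smul_apply,
          Fin.sum_univ_two, Matrix.of_apply, Matrix.cons_val', Matrix.cons_val_zero,
          Matrix.cons_val_one, Matrix.head_cons, Matrix.head_fin_const, Matrix.empty_val',
          Matrix.cons_val_fin_one, Fin.zero_eta, Fin.mk_one, Fin.isValue, smul_eq_mul,
          hphi0, dWrt_neg_one, dWrt_zero]
      · -- entry (0,0)
        linear_combination (-1 : PowerSeries F) * hODE - ζ * hT3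
          - ζ * phiF p (((k+1 : ℕ) : PowerSeries F) * PowerSeries.X * lamP * dWrt lamM) * E * Cpi * hpcast
          - ζ * phiF p (((k+1 : ℕ) : PowerSeries F) * PowerSeries.X * lamP * dWrt lamM) * E * hCp
      · -- entry (0,1)
        linear_combination (-1 : PowerSeries F) * hT1
          + phiF p (((k+1 : ℕ) : PowerSeries F) * PowerSeries.X * lamM * dWrt lamP) * E * Cpi * hpcast
          + phiF p (((k+1 : ℕ) : PowerSeries F) * PowerSeries.X * lamM * dWrt lamP) * E * hCp
      · -- entry (1,0)
        linear_combination hT2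
          - phiF p (((k+1 : ℕ) : PowerSeries F) * PowerSeries.X * lamP * dWrt lamM) * E ^ (k+1) * E * Cpi * hpcast
          - phiF p (((k+1 : ℕ) : PowerSeries F) * PowerSeries.X * lamP * dWrt lamM) * E ^ (k+1) * E * hCp
      · -- entry (1,1)
        ring
  · -- ODE ↔ ∃ a
    constructor
    · intro hODE
      have hXECne : PowerSeries.X * E * Cpi ≠ 0 :=
        mul_ne_zero (mul_ne_zero hXne hEne) hCpine
      have hBrk : ((k+1 : ℕ) : PowerSeries F) * ζ * (lamM * dWrt lamPP - lamPP * dWrt lamM)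
          + lamPP * lamM * dWrt ζ = 0 := by
        refine (mul_eq_zero.mp ?_).resolve_left hXECne
        show (PowerSeries.X * E * Cpi) * _ = 0
        linear_combination hODE - PowerSeries.X * dWrt ζ * hAB
          + PowerSeries.X * Cpi * lamM * dWrt ζ * hd
          + PowerSeries.X * lamP * lamM * dWrt ζ * hCp
      have hkey : dWrt (ζ * lamPP ^ (k+1)) * lamM ^ (k+1)
          = (ζ * lamPP ^ (k+1)) * dWrt (lamM ^ (k+1)) := by
        rw [dWrt_mul, dWrt_pow, dWrt_pow]
        push_cast at hBrk ⊢
        linear_combination lamM ^ k * lamPP ^ k * hBrk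
      have hvne : lamM ^ (k+1) ≠ 0 := pow_ne_zero _ hMne
      have hMinv : lamM ^ (k+1) * (lamM ^ (k+1))⁻¹ = 1 :=
        PowerSeries.mul_inv_cancel _ (by rw [map_pow, hlamM0, one_pow]; exact one_ne_zero)
      have hdinv : dWrt (lamM ^ (k+1)) * (lamM ^ (k+1))⁻¹
          + lamM ^ (k+1) * dWrt ((lamM ^ (k+1))⁻¹) = 0 := by
        have h1 := congrArg dWrt hMinv
        rw [dWrt_mul, dWrt_one] at h1
        linear_combination h1
      have hdr : dWrt (ζ * lamPP ^ (k+1) * (lamM ^ (k+1))⁻¹) = 0 := by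
        rw [dWrt_mul]
        refine mul_left_cancel₀ (mul_ne_zero hvne hvne) ?_
        rw [mul_zero]
        linear_combination (lamM ^ (k+1) * (lamM ^ (k+1))⁻¹) * hkey
          + (ζ * lamPP ^ (k+1) * lamM ^ (k+1)) * hdinv
      have ha := eq_C_of_dWrt _ hdr
      set a := PowerSeries.constantCoeff (ζ * lamPP ^ (k+1) * (lamM ^ (k+1))⁻¹) with hadef
      have hzeta : ζ * lamPP ^ (k+1) = PowerSeries.C a * lamM ^ (k+1) := by
        linear_combination lamM ^ (k+1) * ha - (ζ * lamPP ^ (k+1)) * hMinv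
      refine ⟨a, ?_⟩
      refine mul_right_cancel₀ (pow_ne_zero (k+1) hPPne) ?_
      linear_combination hzeta - (PowerSeries.C a * lamM ^ (k+1)) * hPPk
    · rintro ⟨a, hza⟩
      have hzeta : ζ * lamPP ^ (k+1) = PowerSeries.C a * lamM ^ (k+1) := by
        rw [hza]
        linear_combination (PowerSeries.C a * lamM ^ (k+1)) * hPPk
      have heq2 := congrArg dWrt hzeta
      rw [dWrt_mul, dWrt_pow, dWrt_C_mul, dWrt_pow] at heq2
      refine mul_left_cancel₀ (pow_ne_zero (k+2) hPPne) ?_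
      rw [mul_zero]
      push_cast at heq2 ⊢
      linear_combination PowerSeries.X * E * Cpi * lamM * lamPP ^ 2 * heq2
        - ((k : PowerSeries F) + 1) * PowerSeries.X * E * Cpi * lamPP ^ 2 * dWrt lamM * hzeta
        + PowerSeries.X * dWrt ζ * lamPP ^ (k+2) * hAB
        - PowerSeries.X * Cpi * lamM * dWrt ζ * lamPP ^ (k+2) * hd
        - PowerSeries.X * lamP * lamM * dWrt ζ * lamPP ^ (k+2) * hCp
end
end

section
/- Let p be a prime, h ≥ 1, F/Q_p finite with maximal ideal m_F. Let λ_- = Π_{i≥0}(1 + u^{p^{1+2i}}/p), λ_{++} = Π_{i≥1}(1 + u^{p^{2i}}/p) in R = O_{F,[0,p^{-1/p}]}. If v_p(a_p) > ⌊h/p⌋, then the degree-≤ h truncation of a_p(λ_- /λ_{++})^h lies in m_F[u]. -/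
open PowerSeries Filter

noncomputable section

section Aux

variable {F : Type*} [Field F] (p : ℕ) (vp : F → ℝ)

/-- The key property: all nonzero coefficients sit in degrees divisible by `p`
and have valuation at least `-n/p`. -/
def GoodP (f : PowerSeries F) : Prop :=
  ∀ n : ℕ, (PowerSeries.coeff n) f ≠ 0 →
    p ∣ n ∧ -((n : ℝ) / p) ≤ vp ((PowerSeries.coeff n) f)

variable {p vp}

lemma vp_neg_one (hvp_one : vp 1 = 0)
    (hvp_mul : ∀ x y : F, x ≠ 0 → y ≠ 0 → vp (x * y) = vp x + vp y) :
    vp (-1 : F) = 0 := by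
  have h := hvp_mul (-1) (-1) (by norm_num) (by norm_num)
  rw [neg_mul_neg, one_mul, hvp_one] at h
  linarith

lemma vp_neg (hvp_one : vp 1 = 0)
    (hvp_mul : ∀ x y : F, x ≠ 0 → y ≠ 0 → vp (x * y) = vp x + vp y)
    {x : F} (hx : x ≠ 0) : vp (-x) = vp x := by
  have h := hvp_mul (-1) x (by norm_num) hx
  rw [neg_one_mul] at h
  rw [h, vp_neg_one hvp_one hvp_mul]; ring

/-- valuation of a finite sum is at least a common lower bound of the nonzero terms. -/
lemma vp_sum (hvp_add : ∀ x y : F, x ≠ 0 → y ≠ 0 → x + y ≠ 0 → min (vp x) (vp y) ≤ vp (x + y))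
    {ι : Type*} (s : Finset ι) (g : ι → F) (c : ℝ)
    (hterm : ∀ i ∈ s, g i ≠ 0 → c ≤ vp (g i)) (hs : (∑ i ∈ s, g i) ≠ 0) :
    c ≤ vp (∑ i ∈ s, g i) := by
  classical
  induction s using Finset.induction_on with
  | empty => simp at hs
  | @insert a t ha ih =>
    rw [Finset.sum_insert ha] at hs ⊢
    by_cases h1 : g a = 0
    · rw [h1, zero_add] at hs ⊢
      exact ih (fun i hi => hterm i (Finset.mem_insert_of_mem hi)) hs
    by_cases h2 : (∑ i ∈ t, g i) = 0
    · rw [h2, add_zero] at hs ⊢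
      exact hterm a (Finset.mem_insert_self a t) h1
    have hmin := hvp_add _ _ h1 h2 hs
    have hA := hterm a (Finset.mem_insert_self a t) h1
    have hB := ih (fun i hi => hterm i (Finset.mem_insert_of_mem hi)) h2
    exact le_trans (le_min hA hB) hmin

lemma GoodP.mul (hvp_mul : ∀ x y : F, x ≠ 0 → y ≠ 0 → vp (x * y) = vp x + vp y)
    (hvp_add : ∀ x y : F, x ≠ 0 → y ≠ 0 → x + y ≠ 0 → min (vp x) (vp y) ≤ vp (x + y))
    {f g : PowerSeries F} (hf : GoodP p vp f) (hg : GoodP p vp g) :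
    GoodP p vp (f * g) := by
  intro n hn
  rw [PowerSeries.coeff_mul] at hn ⊢
  have hterm : ∀ x ∈ Finset.HasAntidiagonal.antidiagonal n,
      (PowerSeries.coeff x.1) f * (PowerSeries.coeff x.2) g ≠ 0 →
      p ∣ n ∧ -((n : ℝ) / p) ≤ vp ((PowerSeries.coeff x.1) f * (PowerSeries.coeff x.2) g) := by
    rintro ⟨a, b⟩ hx hne
    have hab : a + b = n := Finset.HasAntidiagonal.mem_antidiagonal.mp hx
    have ha : (PowerSeries.coeff a) f ≠ 0 := left_ne_zero_of_mul hne
    have hb : (PowerSeries.coeff b) g ≠ 0 := right_ne_zero_of_mul hne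
    obtain ⟨hda, hva⟩ := hf a ha
    obtain ⟨hdb, hvb⟩ := hg b hb
    refine ⟨hab ▸ Dvd.dvd.add hda hdb, ?_⟩
    rw [hvp_mul _ _ ha hb]
    have he : -((n : ℝ) / p) = -((a : ℝ) / p) + -((b : ℝ) / p) := by
      rw [← hab]; push_cast; ring
    rw [he]
    exact add_le_add hva hvb
  obtain ⟨x, hx, hxne⟩ := Finset.exists_ne_zero_of_sum_ne_zero hn
  exact ⟨(hterm x hx hxne).1, vp_sum hvp_add _ _ _ (fun x hx hz => (hterm x hx hz).2) hn⟩

lemma GoodP.one (hvp_one : vp 1 = 0) : GoodP p vp (1 : PowerSeries F) := by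
  intro n hn
  rcases eq_or_ne n 0 with rfl | h0
  · simp [hvp_one]
  · simp [PowerSeries.coeff_one, h0] at hn

lemma GoodP.pow (hvp_one : vp 1 = 0)
    (hvp_mul : ∀ x y : F, x ≠ 0 → y ≠ 0 → vp (x * y) = vp x + vp y)
    (hvp_add : ∀ x y : F, x ≠ 0 → y ≠ 0 → x + y ≠ 0 → min (vp x) (vp y) ≤ vp (x + y))
    {f : PowerSeries F} (hf : GoodP p vp f) (k : ℕ) : GoodP p vp (f ^ k) := by
  induction k with
  | zero => simpa using GoodP.one (p := p) hvp_one
  | succ k ih =>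
    rw [pow_succ]
    exact GoodP.mul hvp_mul hvp_add ih hf

/-- coefficients of `phiF p (phiF p f)`. -/
lemma coeff_phi2 (f : PowerSeries F) (n : ℕ) :
    (PowerSeries.coeff n) (phiF p (phiF p f)) =
      if p ∣ n ∧ p ∣ n / p then (PowerSeries.coeff (n / p / p)) f else 0 := by
  simp only [phiF, PowerSeries.coeff_mk]
  by_cases h1 : p ∣ n
  · by_cases h2 : p ∣ n / p <;> simp [h1, h2]
  · simp [h1]

/-- The functional-equation lemma: if `f = (1 + C p⁻¹ X^e) φ²(f)` with `f(0)=1`,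
`p ∣ e`, `p ≤ e`, then `GoodP p vp f`. -/
lemma goodP_of_funEq (hvp_one : vp 1 = 0) (hvp_p : vp (p : F) = 1)
    (hvp_mul : ∀ x y : F, x ≠ 0 → y ≠ 0 → vp (x * y) = vp x + vp y)
    (hvp_add : ∀ x y : F, x ≠ 0 → y ≠ 0 → x + y ≠ 0 → min (vp x) (vp y) ≤ vp (x + y))
    (hp2 : 2 ≤ p) (e : ℕ) (hpe : p ∣ e) (hep : p ≤ e)
    (f : PowerSeries F) (hf0 : PowerSeries.constantCoeff f = 1)
    (hfeq : f = (1 + PowerSeries.C (p : F)⁻¹ * PowerSeries.X ^ e) * phiF p (phiF p f)) :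
    GoodP p vp f := by
  have hp0 : 0 < p := by omega
  have hpR : (0 : ℝ) < (p : ℝ) := by exact_mod_cast hp0
  have hvc : (p : F) ≠ 0 → vp ((p : F)⁻¹) = -1 := by
    intro hpF
    have hmm := hvp_mul (p : F) ((p : F)⁻¹) hpF (inv_ne_zero hpF)
    rw [mul_inv_cancel₀ hpF, hvp_one, hvp_p] at hmm
    linarith
  have hco : ∀ n : ℕ, (PowerSeries.coeff n) f =
      (PowerSeries.coeff n) (phiF p (phiF p f)) +
      (p : F)⁻¹ * (if e ≤ n then (PowerSeries.coeff (n - e)) (phiF p (phiF p f)) else 0) := by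
    intro n
    conv_lhs => rw [hfeq]
    rw [add_mul, one_mul, map_add, mul_assoc, PowerSeries.coeff_C_mul,
      PowerSeries.coeff_X_pow_mul']
  intro n
  induction n using Nat.strong_induction_on with
  | _ n ih =>
    intro hn
    rcases eq_or_ne n 0 with rfl | hn0
    · refine ⟨dvd_zero p, ?_⟩
      have h0 : (PowerSeries.coeff 0) f = 1 := by
        rw [PowerSeries.coeff_zero_eq_constantCoeff, hf0]
      rw [h0, hvp_one]
      simp
    set g := phiF p (phiF p f) with hg
    -- the two summands
    set A := (PowerSeries.coeff n) g with hA_def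
    set B := (p : F)⁻¹ * (if e ≤ n then (PowerSeries.coeff (n - e)) g else 0) with hB_def
    have hA : A ≠ 0 → p ∣ n ∧ -((n : ℝ) / p) ≤ vp A := by
      intro hAne
      have hd : p ∣ n ∧ p ∣ n / p := by
        by_contra hc
        rw [hA_def, hg, coeff_phi2, if_neg hc] at hAne
        exact hAne rfl
      have hAval : A = (PowerSeries.coeff (n / p / p)) f := by
        rw [hA_def, hg, coeff_phi2, if_pos hd]
      set m := n / p / p with hm
      have hmn : m < n := by
        have h1 : n / p < n := Nat.div_lt_self (Nat.pos_of_ne_zero hn0) (by omega)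
        have h2 : n / p / p ≤ n / p := Nat.div_le_self _ _
        omega
      rw [hAval] at hAne ⊢
      obtain ⟨hdm, hvm⟩ := ih m hmn hAne
      refine ⟨hd.1, le_trans ?_ hvm⟩
      rw [neg_le_neg_iff]
      have hc : (m : ℝ) ≤ (n : ℝ) := by exact_mod_cast le_of_lt hmn
      gcongr
    have hB : B ≠ 0 → p ∣ n ∧ -((n : ℝ) / p) ≤ vp B := by
      intro hBne
      have hcne : (p : F)⁻¹ ≠ 0 := left_ne_zero_of_mul hBne
      have hpF : (p : F) ≠ 0 := fun hz => hcne (by rw [hz, inv_zero])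
      have hen : e ≤ n := by
        by_contra hc
        rw [hB_def, if_neg hc, mul_zero] at hBne
        exact hBne rfl
      have hgne : (PowerSeries.coeff (n - e)) g ≠ 0 := by
        intro hz
        rw [hB_def, if_pos hen, hz, mul_zero] at hBne
        exact hBne rfl
      have hd : p ∣ (n - e) ∧ p ∣ (n - e) / p := by
        by_contra hc
        rw [hg, coeff_phi2, if_neg hc] at hgne
        exact hgne rfl
      set m := (n - e) / p / p with hm
      have hgval : (PowerSeries.coeff (n - e)) g = (PowerSeries.coeff m) f := by
        rw [hg, coeff_phi2, if_pos hd]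
      have hmle : m * p * p ≤ n - e := by
        have h1 : m * p ≤ (n - e) / p := by
          rw [hm]; exact Nat.div_mul_le_self _ _
        calc m * p * p ≤ ((n - e) / p) * p := Nat.mul_le_mul_right p h1
          _ ≤ n - e := Nat.div_mul_le_self _ _
      have hmp : m ≤ m * p * p := by
        calc m ≤ m * p := Nat.le_mul_of_pos_right m hp0
          _ ≤ m * p * p := Nat.le_mul_of_pos_right _ hp0
      have hmn : m < n := by
        have h2 : m ≤ n - e := le_trans hmp hmle
        omega
      rw [hgval] at hgne
      obtain ⟨hdm, hvm⟩ := ih m hmn hgne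
      constructor
      · obtain ⟨a, ha⟩ := hd.1
        obtain ⟨b, hb⟩ := hpe
        exact ⟨a + b, by rw [Nat.mul_add, ← ha, ← hb]; omega⟩
      · have hBval : vp B = vp ((p : F)⁻¹) + vp ((PowerSeries.coeff m) f) := by
          rw [hB_def, if_pos hen, hgval, hvp_mul _ _ hcne hgne]
        rw [hBval, hvc hpF]
        have hkey : (p : ℝ) + (m : ℝ) ≤ (n : ℝ) := by
          have hpmn : p + m ≤ n := by
            have h2 : m ≤ n - e := le_trans hmp hmle
            omega
          exact_mod_cast hpmn
        have h2 : -((n : ℝ) / p) ≤ -1 + -((m : ℝ) / p) := by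
          rw [show (-1 + -((m : ℝ) / p)) = -(((p : ℝ) + m) / p) by field_simp; ring,
            neg_le_neg_iff]
          gcongr
        exact le_trans h2 (by linarith)
    have hAB : (PowerSeries.coeff n) f = A + B := hco n
    rw [hAB] at hn ⊢
    by_cases hA0 : A = 0
    · rw [hA0, zero_add] at hn ⊢
      exact hB hn
    by_cases hB0 : B = 0
    · rw [hB0, add_zero] at hn ⊢
      exact hA hA0
    refine ⟨(hA hA0).1, ?_⟩
    exact le_trans (le_min (hA hA0).2 (hB hB0).2) (hvp_add _ _ hA0 hB0 hn)

/-- `GoodP` passes to inverses of series with constant term 1. -/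
lemma GoodP.inv (hvp_one : vp 1 = 0)
    (hvp_mul : ∀ x y : F, x ≠ 0 → y ≠ 0 → vp (x * y) = vp x + vp y)
    (hvp_add : ∀ x y : F, x ≠ 0 → y ≠ 0 → x + y ≠ 0 → min (vp x) (vp y) ≤ vp (x + y))
    {f : PowerSeries F} (hf0 : PowerSeries.constantCoeff f = 1)
    (hf : GoodP p vp f) : GoodP p vp f⁻¹ := by
  intro n
  induction n using Nat.strong_induction_on with
  | _ n ih =>
    intro hn
    rcases eq_or_ne n 0 with rfl | hn0
    · refine ⟨dvd_zero p, ?_⟩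
      rw [PowerSeries.coeff_inv, if_pos rfl, hf0, inv_one, hvp_one]
      simp
    have hcoeff : (PowerSeries.coeff n) f⁻¹ =
        -(∑ x ∈ Finset.HasAntidiagonal.antidiagonal n,
          if x.2 < n then (PowerSeries.coeff x.1) f * (PowerSeries.coeff x.2) f⁻¹ else 0) := by
      rw [PowerSeries.coeff_inv, if_neg hn0, hf0, inv_one, neg_mul, one_mul]
    rw [hcoeff] at hn ⊢
    have hsne : (∑ x ∈ Finset.HasAntidiagonal.antidiagonal n,
        if x.2 < n then (PowerSeries.coeff x.1) f * (PowerSeries.coeff x.2) f⁻¹ else 0) ≠ 0 := by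
      intro hz; rw [hz, neg_zero] at hn; exact hn rfl
    have hterm : ∀ x ∈ Finset.HasAntidiagonal.antidiagonal n,
        (if x.2 < n then (PowerSeries.coeff x.1) f * (PowerSeries.coeff x.2) f⁻¹ else 0) ≠ 0 →
        p ∣ n ∧ -((n : ℝ) / p) ≤
          vp (if x.2 < n then (PowerSeries.coeff x.1) f * (PowerSeries.coeff x.2) f⁻¹ else 0) := by
      rintro ⟨a, b⟩ hx hne
      have hab : a + b = n := Finset.HasAntidiagonal.mem_antidiagonal.mp hx
      have hblt : b < n := by
        by_contra hc
        rw [if_neg hc] at hne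
        exact hne rfl
      rw [if_pos hblt] at hne ⊢
      have ha : (PowerSeries.coeff a) f ≠ 0 := left_ne_zero_of_mul hne
      have hb : (PowerSeries.coeff b) f⁻¹ ≠ 0 := right_ne_zero_of_mul hne
      obtain ⟨hda, hva⟩ := hf a ha
      obtain ⟨hdb, hvb⟩ := ih b hblt hb
      refine ⟨hab ▸ Dvd.dvd.add hda hdb, ?_⟩
      rw [hvp_mul _ _ ha hb]
      have he : -((n : ℝ) / p) = -((a : ℝ) / p) + -((b : ℝ) / p) := by
        rw [← hab]; push_cast; ring
      rw [he]
      exact add_le_add hva hvb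
    obtain ⟨x, hx, hxne⟩ := Finset.exists_ne_zero_of_sum_ne_zero hsne
    refine ⟨(hterm x hx hxne).1, ?_⟩
    rw [vp_neg hvp_one hvp_mul hsne]
    exact vp_sum hvp_add _ _ _ (fun x hx hz => (hterm x hx hz).2) hsne

end Aux

/-- if `v_p(a_p) > ⌊h/p⌋` then the degree ≤ h truncation of
`a_p (λ_- / λ_{++})^h` lies in `m_F[u]`. -/
theorem stmt_9 {F : Type*} [Field F] (p : ℕ) (hp : p.Prime)
    (vp : F → ℝ) (hvp_one : vp 1 = 0) (hvp_p : vp (p : F) = 1)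
    (hvp_mul : ∀ x y : F, x ≠ 0 → y ≠ 0 → vp (x * y) = vp x + vp y)
    (hvp_add : ∀ x y : F, x ≠ 0 → y ≠ 0 → x + y ≠ 0 → min (vp x) (vp y) ≤ vp (x + y))
    (hvp_nat : ∀ n : ℕ, (n : F) ≠ 0 → 0 ≤ vp (n : F))
    (h : ℕ) (hh : 1 ≤ h) (ap : F) (hap : ((h / p : ℕ) : ℝ) < vp ap)
    (lamM lamPP : PowerSeries F)
    (hM0 : PowerSeries.constantCoeff lamM = 1)
    (hMeq : lamM = (1 + PowerSeries.C (p : F)⁻¹ * PowerSeries.X ^ p) *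
      phiF p (phiF p lamM))
    (hPP0 : PowerSeries.constantCoeff lamPP = 1)
    (hPPeq : lamPP = (1 + PowerSeries.C (p : F)⁻¹ * PowerSeries.X ^ (p ^ 2)) *
      phiF p (phiF p lamPP)) :
    ∀ i : ℕ, i ≤ h →
      (PowerSeries.coeff i) (PowerSeries.C ap * (lamM * lamPP⁻¹) ^ h) ≠ 0 →
      0 < vp ((PowerSeries.coeff i) (PowerSeries.C ap * (lamM * lamPP⁻¹) ^ h)) := by
  have hp2 : 2 ≤ p := hp.two_le
  have hp0 : 0 < p := by omega
  have hM : GoodP p vp lamM :=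
    goodP_of_funEq hvp_one hvp_p hvp_mul hvp_add hp2 p (dvd_refl p) (le_refl p) lamM hM0 hMeq
  have hPP : GoodP p vp lamPP :=
    goodP_of_funEq hvp_one hvp_p hvp_mul hvp_add hp2 (p ^ 2) (dvd_pow_self p two_ne_zero)
      (by nlinarith) lamPP hPP0 hPPeq
  have hPPinv : GoodP p vp lamPP⁻¹ := GoodP.inv hvp_one hvp_mul hvp_add hPP0 hPP
  have hG : GoodP p vp ((lamM * lamPP⁻¹) ^ h) :=
    GoodP.pow hvp_one hvp_mul hvp_add (GoodP.mul hvp_mul hvp_add hM hPPinv) h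
  intro i hi hne
  rw [PowerSeries.coeff_C_mul] at hne ⊢
  have hap0 : ap ≠ 0 := left_ne_zero_of_mul hne
  have hci : (PowerSeries.coeff i) ((lamM * lamPP⁻¹) ^ h) ≠ 0 := right_ne_zero_of_mul hne
  obtain ⟨⟨k, hk⟩, hv⟩ := hG i hci
  rw [hvp_mul _ _ hap0 hci]
  have hkh : k ≤ h / p := Nat.le_div_iff_mul_le hp0 |>.mpr (by rw [mul_comm]; omega)
  have hkR : ((k : ℝ)) ≤ ((h / p : ℕ) : ℝ) := by exact_mod_cast hkh
  have hiR : -((i : ℝ) / p) = -(k : ℝ) := by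
    rw [hk]
    push_cast
    rw [mul_comm, mul_div_assoc, div_self (by exact_mod_cast hp0.ne' : (p : ℝ) ≠ 0), mul_one]
  rw [hiR] at hv
  linarith
end
end

section
/- Let M be a finite free module over O_F (power series over F convergent on the open unit disc) with an injective φ-semilinear endomorphism φ_M whose linearization has cokernel killed by E^h, where E = u + p. Let S ⊇ O_F[1/λ] be a φ- and N_∇-stable subring of (K_0⊗F)[[u]]. If N_1, N_2 : M ⊗ S → M ⊗ S are two differential operators over N_∇ = -uλ d/du such that N_i ≡ N_M mod u and N_i φ_M = p(E/c_0) φ_M N_i for i = 1,2, then N_1 = N_2. Equivalently, any S-linear endomorphism H of M⊗S with H(M⊗S) ⊆ u(M⊗S) and H φ_M = p(E/c_0) φ_M H is zero. -/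
/-- uniqueness of the monodromy operator, in its equivalent form:
let `S` be a (commutative) ring with a Frobenius `φS` satisfying `φS u = u^p`,
`M` a module over `S` which is `u`-adically separated, equipped with a
`φS`-semilinear operator `φM` of height ≤ h (i.e. `E^h M` is contained in the
`S`-span of `φM(M)`) where `E` is a unit in `S`.  Then any `S`-linear
endomorphism `H` of `M` with `H(M) ⊆ uM` satisfying the commutation relation
`c₀ H φM = p E φM H` (i.e. `H φM = p(E/c₀) φM H`, with `c₀` a unit) is zero.
In particular two differential operators over `N_∇` lifting `N_M` and
satisfying the commutation relation agree, their difference being such an `H`. -/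
theorem stmt_14 {S M : Type*} [CommRing S] [AddCommGroup M] [Module S M]
    (p : ℕ) (hp : p.Prime) (φS : S →+* S) (u E c₀ : S)
    (hφu : φS u = u ^ p) (hE : IsUnit E) (hc₀ : IsUnit c₀) (h : ℕ)
    (φM : M →ₛₗ[φS] M)
    (hheight : ∀ x : M, E ^ h • x ∈ Submodule.span S (Set.range φM))
    (hsep : (⨅ i : ℕ, (Ideal.span {u ^ i} : Ideal S) • (⊤ : Submodule S M)) = ⊥)
    (H : M →ₗ[S] M)
    (hHu : LinearMap.range H ≤ (Ideal.span {u} : Ideal S) • (⊤ : Submodule S M))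
    (hcomm : ∀ x : M, c₀ • H (φM x) = ((p : S) * E) • φM (H x)) :
    H = 0 := by
  -- Key induction step: H(M) ⊆ u^n M implies H(M) ⊆ u^(p*n) M
  have key : ∀ n : ℕ,
      LinearMap.range H ≤ (Ideal.span {u ^ n} : Ideal S) • (⊤ : Submodule S M) →
      LinearMap.range H ≤ (Ideal.span {u ^ (p * n)} : Ideal S) • (⊤ : Submodule S M) := by
    intro n hn
    have hφ : ∀ y : M,
        H (φM y) ∈ (Ideal.span {u ^ (p * n)} : Ideal S) • (⊤ : Submodule S M) := by
      intro y
      have hy : H y ∈ (Ideal.span {u ^ n} : Ideal S) • (⊤ : Submodule S M) :=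
        hn (LinearMap.mem_range_self H y)
      have h1 : φM (H y) ∈ (Ideal.span {u ^ (p * n)} : Ideal S) • (⊤ : Submodule S M) := by
        refine Submodule.smul_induction_on hy ?_ ?_
        · intro r hr m _
          rw [LinearMap.map_smulₛₗ]
          refine Submodule.smul_mem_smul ?_ trivial
          rw [Ideal.mem_span_singleton] at hr ⊢
          obtain ⟨s, rfl⟩ := hr
          exact ⟨φS s, by rw [map_mul, map_pow, hφu, ← pow_mul]⟩
        · intro a b ha hb
          rw [map_add]
          exact Submodule.add_mem _ ha hb
      have h2 : c₀ • H (φM y) ∈ (Ideal.span {u ^ (p * n)} : Ideal S) • (⊤ : Submodule S M) := by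
        rw [hcomm]
        exact Submodule.smul_mem _ _ h1
      have h3 := Submodule.smul_mem ((Ideal.span {u ^ (p * n)} : Ideal S) • (⊤ : Submodule S M))
        ((hc₀.unit⁻¹ : Sˣ) : S) h2
      rwa [smul_smul, IsUnit.val_inv_mul, one_smul] at h3
    rintro _ ⟨x, rfl⟩
    have hspan : ∀ w ∈ Submodule.span S (Set.range φM),
        H w ∈ (Ideal.span {u ^ (p * n)} : Ideal S) • (⊤ : Submodule S M) := by
      intro w hw
      induction hw using Submodule.span_induction with
      | mem w hw => obtain ⟨y, rfl⟩ := hw; exact hφ y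
      | zero => rw [map_zero]; exact Submodule.zero_mem _
      | add a b _ _ ha hb => rw [map_add]; exact Submodule.add_mem _ ha hb
      | smul s a _ ha => rw [map_smul]; exact Submodule.smul_mem _ s ha
    have h4 : (E ^ h) • H x ∈ (Ideal.span {u ^ (p * n)} : Ideal S) • (⊤ : Submodule S M) := by
      rw [← map_smul]
      exact hspan _ (hheight x)
    have h5 := Submodule.smul_mem ((Ideal.span {u ^ (p * n)} : Ideal S) • (⊤ : Submodule S M))
      (((hE.pow h).unit⁻¹ : Sˣ) : S) h4
    rwa [smul_smul, IsUnit.val_inv_mul, one_smul] at h5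
  have hpow : ∀ i : ℕ,
      LinearMap.range H ≤ (Ideal.span {u ^ p ^ i} : Ideal S) • (⊤ : Submodule S M) := by
    intro i
    induction i with
    | zero => simpa using hHu
    | succ i ih =>
      have := key _ ih
      rwa [← pow_succ'] at this
  ext x
  simp only [LinearMap.zero_apply]
  have hall : H x ∈ (⨅ i : ℕ, (Ideal.span {u ^ i} : Ideal S) • (⊤ : Submodule S M)) := by
    rw [Submodule.mem_iInf]
    intro i
    have hle : i ≤ p ^ i := le_of_lt (Nat.lt_pow_self hp.one_lt : i < p ^ i)
    refine Submodule.smul_mono_left ?_ (hpow i (LinearMap.mem_range_self H x))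
    exact Ideal.span_singleton_le_span_singleton.mpr (pow_dvd_pow u hle)
  rw [hsep] at hall
  exact hall
end
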